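/- arXiv:2506.23959 — 2 statements merged into one kernel-verified Lean document; each statement's English description precedes it below -/
import Mathlib

section
/- If x, y are positive reals, w is an even positive integer, and the two-coloured quantum integers satisfy p^x_{w+1}(x,y) = p^y_{w+1}(x,y) = 1 with p^x_n(x,y) > 0 and p^y_n(x,y) > 0 for 1 ≤ n ≤ w, then x = y. (Hence every 2-periodic positive real frieze of type A_w with w even is constant.) -/
/-- The pair of two-coloured quantum integers `tc x y n = (p^x_n, p^y_n)`. -/
def tc (x y : ℝ) : ℕ → ℝ × ℝ
  | 0 => (1, 1)
  | 1 => (x, y)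
  | n + 2 => (x * (tc x y (n + 1)).2 - (tc x y n).1,
              y * (tc x y (n + 1)).1 - (tc x y n).2)

def px (x y : ℝ) (n : ℕ) : ℝ := (tc x y n).1
def py (x y : ℝ) (n : ℕ) : ℝ := (tc x y n).2

lemma tc_key (x y : ℝ) : ∀ n : ℕ,
    (Even n → px x y n = py x y n) ∧ (Odd n → y * px x y n = x * py x y n) := by
  intro n
  induction n using Nat.twoStepInduction with
  | zero => simp [px, py, tc]
  | one =>
      refine ⟨fun h => absurd h (by simp), fun _ => ?_⟩
      simp [px, py, tc]; ring
  | more n ih2 ih1 =>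
      constructor
      · intro h
        have hn : Even n := by
          rcases h with ⟨k, hk⟩
          exact ⟨k - 1, by omega⟩
        have hodd : Odd (n + 1) := by exact Even.add_one hn
        have e1 := ih2.1 hn
        have e2 := ih1.2 hodd
        simp only [px, py, tc] at *
        linarith
      · intro h
        have hn : Odd n := by
          rcases h with ⟨k, hk⟩
          exact ⟨k - 1, by omega⟩
        have heven : Even (n + 1) := Odd.add_one hn
        have e1 := ih2.2 hn
        have e2 := ih1.1 heven
        simp only [px, py, tc] at *
        linear_combination -x*y*e2 - e1

/-- If `w` is an even positive integer and `x, y > 0` give a 2-periodic positive frieze of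
type `A_w`, i.e. `p^x_{w+1} = p^y_{w+1} = 1` with all intermediate values positive,
then `x = y` (the frieze is constant). -/
theorem typeA_even_constant (w : ℕ) (hw : Even w) (hw1 : 0 < w)
    (x y : ℝ) (hx : 0 < x) (hy : 0 < y)
    (h1 : px x y (w + 1) = 1) (h2 : py x y (w + 1) = 1)
    (hpos : ∀ n, 1 ≤ n → n ≤ w → 0 < px x y n ∧ 0 < py x y n) :
    x = y := by
  have := (tc_key x y (w + 1)).2 (Even.add_one hw)
  rw [h1, h2] at this
  linarith
end

section
/- Suppose x, y > 0, w is odd, and the two-coloured quantum integers satisfy p^x_{w+1}(x,y) = p^y_{w+1}(x,y) = 1 with all intermediate values positive. Then xy = (2cos(π/(w+3)))², and conversely for any x,y > 0 with xy = (2cos(π/(w+3)))² these conditions hold; explicitly p^x_n = [n+1]_h for n even and p^x_n = x·[n+1]_h/[2]_h for n odd, where h = w+3 and [k]_h = sin(kπ/h)/sin(π/h). -/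
open Real

/-- Quantum integer `[k]_h = sin(kπ/h)/sin(π/h)`. -/
noncomputable def qint (h k : ℕ) : ℝ := sin (k * π / h) / sin (π / h)

lemma px_rec (x y : ℝ) (n : ℕ) : px x y (n+2) = x * py x y (n+1) - px x y n := rfl
lemma py_rec (x y : ℝ) (n : ℕ) : py x y (n+2) = y * px x y (n+1) - py x y n := rfl
lemma px_zero (x y : ℝ) : px x y 0 = 1 := rfl
lemma py_zero (x y : ℝ) : py x y 0 = 1 := rfl
lemma px_one (x y : ℝ) : px x y 1 = x := rfl
lemma py_one (x y : ℝ) : py x y 1 = y := rfl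

lemma sin_step (θ a : ℝ) : sin (a + 2*θ) = 2 * cos θ * sin (a + θ) - sin a := by
  have h1 := Real.sin_add (a + θ) θ
  have h2 := Real.sin_sub (a + θ) θ
  have h3 : sin (a + θ + θ) + sin (a + θ - θ) = 2 * cos θ * sin (a + θ) := by
    rw [h1, h2]; ring
  have e1 : a + θ + θ = a + 2*θ := by ring
  have e2 : a + θ - θ = a := by ring
  rw [e1, e2] at h3
  linarith

def tcForm (x y θ : ℝ) (n : ℕ) : Prop :=
  (Even n → px x y n = sin ((n+1 : ℕ) * θ) / sin θ ∧
            py x y n = sin ((n+1 : ℕ) * θ) / sin θ) ∧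
  (Odd n → px x y n = x * sin ((n+1 : ℕ) * θ) / (2 * cos θ * sin θ) ∧
           py x y n = y * sin ((n+1 : ℕ) * θ) / (2 * cos θ * sin θ))

lemma tc_closed (x y θ : ℝ) (hs : sin θ ≠ 0) (hc : cos θ ≠ 0)
    (hxy : x * y = (2 * cos θ) ^ 2) :
    ∀ n : ℕ, tcForm x y θ n := by
  have key : ∀ n : ℕ, tcForm x y θ n ∧ tcForm x y θ (n+1) := by
    intro n
    induction n with
    | zero =>
      constructor
      · refine ⟨fun _ => ?_, fun h => absurd h (by decide)⟩
        constructor <;> · show (1:ℝ) = sin ((1:ℕ) * θ) / sin θ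
                          rw [Nat.cast_one, one_mul, div_self hs]
      · refine ⟨fun h => absurd h (by decide), fun _ => ?_⟩
        have h2 : sin ((2:ℕ) * θ) = 2 * sin θ * cos θ := by
          push_cast
          rw [Real.sin_two_mul]
        constructor
        · show x = x * sin ((2:ℕ) * θ) / (2 * cos θ * sin θ)
          rw [h2]; field_simp
        · show y = y * sin ((2:ℕ) * θ) / (2 * cos θ * sin θ)
          rw [h2]; field_simp
    | succ k ih =>
      refine ⟨ih.2, ?_, ?_⟩
      all_goals intro hk2
      · -- k+2 even, so k even
        have hk : Even k := by rcases hk2 with ⟨m, hm⟩; exact ⟨m-1, by omega⟩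
        have hk1 : Odd (k+1) := Even.add_one hk
        obtain ⟨hpx, hpy⟩ := ih.1.1 hk
        obtain ⟨hpx1, hpy1⟩ := ih.2.2 hk1
        have hstep : sin ((k+1+1+1 : ℕ) * θ)
            = 2 * cos θ * sin ((k+1+1 : ℕ) * θ) - sin ((k+1 : ℕ) * θ) := by
          push_cast
          have h := sin_step θ (((k:ℝ)+1) * θ)
          rw [show ((k:ℝ)+1)*θ + 2*θ = ((k:ℝ)+1+1+1)*θ by ring,
              show ((k:ℝ)+1)*θ + θ = ((k:ℝ)+1+1)*θ by ring] at h
          exact h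
        constructor
        · rw [px_rec, hpy1, hpx, hstep]
          push_cast
          field_simp
          linear_combination (sin (((k:ℝ)+1+1)*θ)) * hxy
        · rw [py_rec, hpx1, hpy, hstep]
          push_cast
          field_simp
          linear_combination (sin (((k:ℝ)+1+1)*θ)) * hxy
      · -- k+2 odd, so k odd
        have hk : Odd k := by rcases hk2 with ⟨m, hm⟩; exact ⟨m-1, by omega⟩
        have hk1 : Even (k+1) := Odd.add_one hk
        obtain ⟨hpx, hpy⟩ := ih.1.2 hk
        obtain ⟨hpx1, hpy1⟩ := ih.2.1 hk1
        have hstep : sin ((k+1+1+1 : ℕ) * θ)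
            = 2 * cos θ * sin ((k+1+1 : ℕ) * θ) - sin ((k+1 : ℕ) * θ) := by
          push_cast
          have h := sin_step θ (((k:ℝ)+1) * θ)
          rw [show ((k:ℝ)+1)*θ + 2*θ = ((k:ℝ)+1+1+1)*θ by ring,
              show ((k:ℝ)+1)*θ + θ = ((k:ℝ)+1+1)*θ by ring] at h
          exact h
        constructor
        · rw [px_rec, hpy1, hpx, hstep]
          push_cast
          field_simp
        · rw [py_rec, hpx1, hpy, hstep]
          push_cast
          field_simp
  exact fun n => (key n).1

def parForm (x y : ℝ) (n : ℕ) : Prop :=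
  (Even n → px x y n = py x y n) ∧ (Odd n → x * py x y n = y * px x y n)

lemma tc_par (x y : ℝ) : ∀ n, parForm x y n := by
  have key : ∀ n, parForm x y n ∧ parForm x y (n+1) := by
    intro n
    induction n with
    | zero =>
      refine ⟨⟨fun _ => rfl, fun h => absurd h (by decide)⟩,
              ⟨fun h => absurd h (by decide), fun _ => ?_⟩⟩
      show x * y = y * x; ring
    | succ k ih =>
      refine ⟨ih.2, ?_, ?_⟩
      all_goals intro hk2
      · have hk : Even k := by rcases hk2 with ⟨m, hm⟩; exact ⟨m-1, by omega⟩
        have h1 := ih.1.1 hk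
        have h2 := ih.2.2 (Even.add_one hk)
        rw [px_rec, py_rec, h1, h2]
      · have hk : Odd k := by rcases hk2 with ⟨m, hm⟩; exact ⟨m-1, by omega⟩
        have h1 := ih.1.2 hk
        have h2 := ih.2.1 (Odd.add_one hk)
        rw [px_rec, py_rec, h2]
        nlinarith [h1]
  exact fun n => (key n).1

lemma px_rec_even (x y : ℝ) (hx : x ≠ 0) {n : ℕ} (hn : Even n) :
    px x y (n+2) = y * px x y (n+1) - px x y n := by
  have h := (tc_par x y (n+1)).2 (Even.add_one hn)
  rw [px_rec]
  have : x * py x y (n+1) = y * px x y (n+1) := h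
  rw [← this]
lemma px_rec_odd (x y : ℝ) {n : ℕ} (hn : Odd n) :
    px x y (n+2) = x * px x y (n+1) - px x y n := by
  have h := (tc_par x y (n+1)).1 (Odd.add_one hn)
  rw [px_rec, h]

def grForm (x y : ℝ) (n : ℕ) : Prop :=
  0 < px x y n ∧
  (Even n → 2 * px x y (n+1) ≥ x * px x y n + x ∧ (n:ℝ) + 1 ≤ px x y n) ∧
  (Odd n → x * px x y (n+1) ≥ 2 * px x y n + x)

lemma tc_growth (x y : ℝ) (hx : 0 < x) (hy : 0 < y) (ht : 4 ≤ x * y) :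
    ∀ n, grForm x y n := by
  have hx' : x ≠ 0 := ne_of_gt hx
  have key : ∀ n, grForm x y n ∧ grForm x y (n+1) := by
    intro n
    induction n with
    | zero =>
      have e2 : px x y 2 = x * y - 1 := by
        rw [px_rec]; show x * y - 1 = x * y - 1; rfl
      refine ⟨⟨one_pos, fun _ => ⟨?_, by norm_num [px, tc]⟩, fun h => absurd h (by decide)⟩,
              ⟨hx, fun h => absurd h (by decide), fun _ => ?_⟩⟩
      · show 2 * px x y 1 ≥ x * px x y 0 + x
        show 2 * x ≥ x * 1 + x
        linarith
      · show x * px x y 2 ≥ 2 * px x y 1 + x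
        rw [e2]; show x * (x*y-1) ≥ 2 * x + x
        nlinarith
    | succ k ih =>
      obtain ⟨hpos, hev, hod⟩ := ih.1
      obtain ⟨hpos1, hev1, hod1⟩ := ih.2
      rcases Nat.even_or_odd k with hk | hk
      · -- k even, k+1 odd, k+2 even
        have hk1 : Odd (k+1) := Even.add_one hk
        have hk2 : Even (k+1+1) := Odd.add_one hk1
        have H1 := hod1 hk1      -- x * a(k+2) ≥ 2 a(k+1) + x
        obtain ⟨H2, H3⟩ := hev hk  -- 2 a(k+1) ≥ x a k + x, k+1 ≤ a k
        have hpos2 : 0 < px x y (k+1+1) := by nlinarith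
        refine ⟨ih.2, hpos2, fun _ => ⟨?_, ?_⟩, fun h => (Nat.not_odd_iff_even.mpr hk2 h).elim⟩
        · -- 2 a(k+3) ≥ x a(k+2) + x ; a(k+3) = x a(k+2) - a(k+1)  (rec at odd k+1)
          have hr := px_rec_odd x y hk1
          rw [hr]
          nlinarith
        · -- a(k+2) ≥ k+3 : a(k+2) = y a(k+1) - a k (rec at even k)
          have hr := px_rec_even x y hx' hk
          have : x * px x y (k+2) = (x*y) * px x y (k+1) - x * px x y k := by rw [hr]; ring
          have h4 : (x*y) * px x y (k+1) ≥ 4 * px x y (k+1) := by nlinarith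
          push_cast
          nlinarith
      · -- k odd, k+1 even, k+2 odd
        have hk1 : Even (k+1) := Odd.add_one hk
        have hk2 : Odd (k+1+1) := Even.add_one hk1
        obtain ⟨H2, H3⟩ := hev1 hk1  -- 2 a(k+2) ≥ x a(k+1) + x, k+2 ≤ a(k+1)
        have hpos2 : 0 < px x y (k+1+1) := by nlinarith
        refine ⟨ih.2, hpos2, fun h => (Nat.not_odd_iff_even.mpr h hk2).elim, fun _ => ?_⟩
        -- x a(k+3) ≥ 2 a(k+2) + x ; a(k+3) = y a(k+2) - a(k+1) (rec at even k+1)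
        have hr := px_rec_even x y hx' hk1
        have : x * px x y (k+1+2) = (x*y) * px x y (k+1+1) - x * px x y (k+1) := by rw [hr]; ring
        nlinarith
  exact fun n => (key n).1

set_option maxHeartbeats 2000000 in
/-- For `w` odd and `x, y > 0`, the frieze conditions `p^x_{w+1} = p^y_{w+1} = 1` with all
intermediate values positive hold if and only if `xy = (2cos(π/(w+3)))²`; and in that case
`p^x_n = [n+1]_h` (`= p^y_n`) for `n` even and `p^x_n = x·[n+1]_h/[2]_h`,
`p^y_n = y·[n+1]_h/[2]_h` for `n` odd, where `h = w+3`. -/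
theorem typeA_odd_classification (w : ℕ) (hw : Odd w)
    (x y : ℝ) (hx : 0 < x) (hy : 0 < y) :
    ((px x y (w + 1) = 1 ∧ py x y (w + 1) = 1 ∧
        ∀ n, 1 ≤ n → n ≤ w → 0 < px x y n ∧ 0 < py x y n) ↔
      x * y = (2 * cos (π / (w + 3))) ^ 2) ∧
    (x * y = (2 * cos (π / (w + 3))) ^ 2 →
      ∀ n : ℕ,
        (Even n → px x y n = qint (w + 3) (n + 1) ∧ py x y n = qint (w + 3) (n + 1)) ∧
        (Odd n → px x y n = x * qint (w + 3) (n + 1) / qint (w + 3) 2 ∧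
                 py x y n = y * qint (w + 3) (n + 1) / qint (w + 3) 2)) := by
  have hw1 : 1 ≤ w := hw.pos
  have hπ := Real.pi_pos
  have hwcast : (0:ℝ) ≤ (w:ℝ) := Nat.cast_nonneg w
  set θ : ℝ := π / (w + 3) with hθdef
  have hwpos : (0:ℝ) < (w:ℝ) + 3 := by positivity
  have hθpos : 0 < θ := by positivity
  have hident : ((w:ℝ) + 3) * θ = π := by
    rw [hθdef]; field_simp
  have hθlt : θ < π / 2 := by nlinarith
  have hθltπ : θ < π := by linarith
  have hsin : 0 < sin θ := Real.sin_pos_of_pos_of_lt_pi hθpos hθltπ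
  have hcos : 0 < cos θ := Real.cos_pos_of_mem_Ioo ⟨by linarith, hθlt⟩
  have hq : ∀ k : ℕ, qint (w + 3) k = sin ((k : ℕ) * θ) / sin θ := by
    intro k
    unfold qint
    rw [hθdef]
    push_cast
    rw [mul_div_assoc]
  have hq2 : qint (w + 3) 2 = 2 * cos θ := by
    rw [hq]
    have e : ((2:ℕ):ℝ) * θ = 2 * θ := by push_cast; ring
    rw [e, Real.sin_two_mul]
    field_simp
  have hEw1 : Even (w + 1) := hw.add_one
  -- Part 2
  have part2 : x * y = (2 * cos (π / (w + 3))) ^ 2 →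
      ∀ n : ℕ,
        (Even n → px x y n = qint (w + 3) (n + 1) ∧ py x y n = qint (w + 3) (n + 1)) ∧
        (Odd n → px x y n = x * qint (w + 3) (n + 1) / qint (w + 3) 2 ∧
                 py x y n = y * qint (w + 3) (n + 1) / qint (w + 3) 2) := by
    intro hxy n
    obtain ⟨hev, hod⟩ := tc_closed x y θ (ne_of_gt hsin) (ne_of_gt hcos) hxy n
    constructor
    · intro hn
      rw [hq (n+1)]
      exact hev hn
    · intro hn
      obtain ⟨e1, e2⟩ := hod hn
      rw [hq (n+1), hq2, e1, e2]
      constructor <;> · field_simp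
  refine ⟨⟨?_, ?_⟩, part2⟩
  · -- forward direction
    rintro ⟨h1, h2, hpos⟩
    rcases lt_or_ge (x * y) 4 with hlt | hge
    · -- case x*y < 4
      have htpos : 0 < x * y := mul_pos hx hy
      set θ₀ : ℝ := Real.arccos (Real.sqrt (x * y) / 2) with hθ₀def
      have hsq2 : Real.sqrt (x * y) < 2 := by
        rw [Real.sqrt_lt' two_pos]; nlinarith
      have hsqpos : 0 < Real.sqrt (x * y) := Real.sqrt_pos.mpr htpos
      have hcc : cos θ₀ = Real.sqrt (x * y) / 2 :=
        Real.cos_arccos (by nlinarith) (by nlinarith)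
      have hcpos : 0 < cos θ₀ := by rw [hcc]; positivity
      have hθ₀pos : 0 < θ₀ := Real.arccos_pos.mpr (by nlinarith)
      have hθ₀lt : θ₀ < π / 2 := Real.arccos_lt_pi_div_two.mpr (by positivity)
      have hs₀ : 0 < sin θ₀ := Real.sin_pos_of_pos_of_lt_pi hθ₀pos (by linarith)
      have hxyc : x * y = (2 * cos θ₀) ^ 2 := by
        rw [hcc, show (2 * (Real.sqrt (x * y) / 2)) ^ 2 = Real.sqrt (x * y) ^ 2 by ring,
            Real.sq_sqrt (le_of_lt htpos)]
      have hform := tc_closed x y θ₀ (ne_of_gt hs₀) (ne_of_gt hcpos) hxyc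
      -- from h1 : px (w+1) = 1 get sin((w+2)θ₀) = sin θ₀
      have hEq : sin (((w:ℝ) + 2) * θ₀) = sin θ₀ := by
        have hold := ((hform (w+1)).1 hEw1).1
        rw [h1] at hold
        have h' := (div_eq_one_iff_eq (ne_of_gt hs₀)).mp hold.symm
        have e : ((w+1+1 : ℕ):ℝ) * θ₀ = ((w:ℝ) + 2) * θ₀ := by push_cast; ring
        rw [e] at h'
        exact h'
      -- positivity of sin(kθ₀) for 1 ≤ k ≤ w+2
      have spos : ∀ k : ℕ, 1 ≤ k → k ≤ w + 2 → 0 < sin ((k:ℝ) * θ₀) := by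
        intro k hk1 hk2
        rcases eq_or_lt_of_le hk2 with rfl | hk2'
        · have e : ((w+2 : ℕ):ℝ) * θ₀ = ((w:ℝ) + 2) * θ₀ := by push_cast; ring
          rw [e, hEq]; exact hs₀
        · rcases eq_or_lt_of_le hk1 with rfl | hk1'
          · simpa using hs₀
          · obtain ⟨n, rfl⟩ : ∃ n, k = n + 1 := ⟨k - 1, by omega⟩
            have hn1 : 1 ≤ n := by omega
            have hnw : n ≤ w := by omega
            obtain ⟨hpx, -⟩ := hpos n hn1 hnw
            rcases Nat.even_or_odd n with hn | hn
            · obtain ⟨hf, -⟩ := (hform n).1 hn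
              rw [hf] at hpx
              rcases div_pos_iff.mp hpx with ⟨h, -⟩ | ⟨-, h⟩
              · exact h
              · linarith
            · obtain ⟨hf, -⟩ := (hform n).2 hn
              rw [hf] at hpx
              rcases div_pos_iff.mp hpx with ⟨h, -⟩ | ⟨-, h⟩
              · rcases mul_pos_iff.mp h with ⟨-, hS⟩ | ⟨hx', -⟩
                · exact hS
                · linarith
              · have hden : 0 < 2 * cos θ₀ * sin θ₀ := by positivity
                linarith
      -- bound: kθ₀ < π for all k ≤ w+2
      have bound : ∀ k : ℕ, k ≤ w + 2 → (k:ℝ) * θ₀ < π := by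
        intro k
        induction k with
        | zero => intro _; simpa using hπ
        | succ m ih =>
          intro hm
          have h1' := ih (by omega)
          have sp := spos (m+1) (by omega) hm
          push_cast at sp ⊢
          by_contra hc'
          push_neg at hc'
          have em : ((m:ℝ) + 1) * θ₀ = (m:ℝ) * θ₀ + θ₀ := by ring
          have hup : ((m:ℝ) + 1) * θ₀ < π + π / 2 := by linarith
          have hA : sin (((m:ℝ) + 1) * θ₀) ≤ 0 := by
            have hb1 : 0 ≤ ((m:ℝ) + 1) * θ₀ - π := by linarith
            have hb2 : ((m:ℝ) + 1) * θ₀ - π ≤ π := by linarith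
            have hs := Real.sin_nonneg_of_nonneg_of_le_pi hb1 hb2
            rw [Real.sin_sub_pi] at hs
            linarith
          linarith
      have hb2' : ((w:ℝ) + 2) * θ₀ < π := by
        have := bound (w+2) (le_refl _)
        push_cast at this
        linarith
      have hb1' : ((w:ℝ) + 1) * θ₀ < π := by
        have := bound (w+1) (by omega)
        push_cast at this
        linarith
      -- conclude θ₀ = π/(w+3)
      have hsum := Real.sin_sub_sin (((w:ℝ) + 2) * θ₀) θ₀
      rw [hEq, sub_self] at hsum
      have hp1 : 0 < ((w:ℝ) + 1) * θ₀ := mul_pos (by linarith) hθ₀pos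
      have eA : ((w:ℝ) + 2) * θ₀ = ((w:ℝ) + 1) * θ₀ + θ₀ := by ring
      have hhalfpos : 0 < (((w:ℝ) + 2) * θ₀ - θ₀) / 2 := by linarith
      have hhalflt : (((w:ℝ) + 2) * θ₀ - θ₀) / 2 < π / 2 := by linarith
      have hsinhalf : 0 < sin ((((w:ℝ) + 2) * θ₀ - θ₀) / 2) :=
        Real.sin_pos_of_pos_of_lt_pi hhalfpos (by linarith)
      have hcoszero : cos ((((w:ℝ) + 2) * θ₀ + θ₀) / 2) = 0 := by
        by_contra hcz
        exact (mul_ne_zero (mul_ne_zero two_ne_zero (ne_of_gt hsinhalf)) hcz) hsum.symm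
      obtain ⟨kk, hkk⟩ := Real.cos_eq_zero_iff.mp hcoszero
      have hub : (((w:ℝ) + 2) * θ₀ + θ₀) / 2 < 3 * π / 4 := by linarith
      have hlb : 0 < (((w:ℝ) + 2) * θ₀ + θ₀) / 2 := by linarith
      rw [hkk] at hub hlb
      have hkk0 : kk = 0 := by
        have c1 : (0:ℝ) < 2 * (kk:ℝ) + 1 := by
          by_contra hcon
          push_neg at hcon
          nlinarith [hlb, hπ, hcon]
        have c2 : 2 * (kk:ℝ) + 1 < 3 / 2 := by
          by_contra hcon
          push_neg at hcon
          nlinarith [hub, hπ, hcon]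
        have d1 : (-1:ℝ) < (kk:ℝ) := by linarith
        have d2 : (kk:ℝ) < 1 := by linarith
        have i1 : (-1:ℤ) < kk := by exact_mod_cast d1
        have i2 : kk < 1 := by exact_mod_cast d2
        omega
      rw [hkk0] at hkk
      have hval : ((w:ℝ) + 3) * θ₀ = π := by
        have : (2 * ((0:ℤ):ℝ) + 1) * π / 2 = π / 2 := by norm_num
        rw [this] at hkk
        linarith
      have hθ₀val : θ₀ = θ := by
        rw [hθdef, eq_div_iff (ne_of_gt hwpos)]
        linarith [hval]
      rw [← hθ₀val]
      exact hxyc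
    · -- case 4 ≤ x*y : contradiction with growth
      exfalso
      have hg := ((tc_growth x y hx hy hge (w+1)).2.1 hEw1).2
      rw [h1] at hg
      push_cast at hg
      linarith
  · -- backward direction
    intro hxy
    have hall := part2 hxy
    have hq1 : qint (w + 3) (w + 1 + 1) = 1 := by
      rw [hq]
      have harg : ((w+1+1 : ℕ):ℝ) * θ = π - θ := by
        push_cast
        linear_combination hident
      rw [harg, Real.sin_pi_sub, div_self (ne_of_gt hsin)]
    obtain ⟨hpx1, hpy1⟩ := (hall (w+1)).1 hEw1
    refine ⟨by rw [hpx1, hq1], by rw [hpy1, hq1], ?_⟩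
    intro n hn1 hnw
    have hqpos : 0 < qint (w + 3) (n + 1) := by
      rw [hq]
      apply div_pos _ hsin
      apply Real.sin_pos_of_pos_of_lt_pi
      · positivity
      · have hc1 : ((n+1 : ℕ):ℝ) ≤ (w:ℝ) + 1 := by
          push_cast
          have : (n:ℝ) ≤ (w:ℝ) := by exact_mod_cast hnw
          linarith
        have hmul := mul_le_mul_of_nonneg_right hc1 (le_of_lt hθpos)
        have e3 : ((w:ℝ) + 3) * θ = ((w:ℝ) + 1) * θ + 2 * θ := by ring
        linarith [hident, hθpos, hmul, e3]
    rcases Nat.even_or_odd n with hn | hn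
    · obtain ⟨e1, e2⟩ := (hall n).1 hn
      rw [e1, e2]
      exact ⟨hqpos, hqpos⟩
    · obtain ⟨e1, e2⟩ := (hall n).2 hn
      rw [e1, e2, hq2]
      constructor <;> positivity
end
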